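/- Let 𝒳 ⊆ ℝⁿ be open, let f : ℝⁿ → ℝⁿ and g : ℝⁿ → Matrix (Fin n) (Fin m) ℝ be locally Lipschitz continuous on 𝒳, and let K ⊆ 𝒳 be compact. Fix T > 0, p ∈ ℕ with p ≥ 1, Runge–Kutta weights b₁,…,b_p ≥ 0 with Σᵢ bᵢ = 1, and coefficients a_{i,j} ∈ ℝ (1 ≤ j < i ≤ p). Let {k_h : 𝒳 → ℝᵐ | h ∈ (0,T]} be a family of maps and suppose there exist h₁ ∈ (0,T] and M_K ≥ 0 such that ‖k_h(x)‖ ≤ M_K for every h ∈ (0,h₁) and x ∈ K. Then there exist h* ∈ (0,h₁] and a function ρ : ℝ → ℝ that is continuous, strictly increasing on [0,∞), satisfies ρ(0) = 0 and ρ(r) → ∞ as r → ∞, such that for every h ∈ (0,h*), every x ∈ K, and every differentiable φ : [0,h] → ℝⁿ with φ(0) = x, φ(t) ∈ 𝒳 and φ′(t) = f(φ(t)) + g(φ(t))·k_h(x) for all t ∈ [0,h], one has ‖φ(h) − F^{a,p}_h(x, k_h(x))‖ ≤ h·ρ(h). -/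

import Mathlib

attribute [local instance] Matrix.normedAddCommGroup

/-- Matrix–vector multiplication as a map between Euclidean spaces. -/
noncomputable def mulVecE {n m : ℕ} (g : Matrix (Fin n) (Fin m) ℝ)
    (u : EuclideanSpace ℝ (Fin m)) : EuclideanSpace ℝ (Fin n) :=
  (WithLp.equiv 2 (Fin n → ℝ)).symm (g.mulVec ((WithLp.equiv 2 (Fin m → ℝ)) u))

/-- Runge–Kutta stage points (0-indexed): `z 0 = x`,
`z i = x + h • Σ_{j<i} a i j • v j (z j)`. -/
noncomputable def rkStages {S : Type*} [AddCommGroup S] [Module ℝ S]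
    (v : ℕ → S → S) (a : ℕ → ℕ → ℝ) (h : ℝ) (x : S) : ℕ → S :=
  fun i => Nat.strongRecOn i fun i ih =>
    x + h • ∑ j ∈ (Finset.range i).attach, a i j.1 • v j.1 (ih j.1 (Finset.mem_range.mp j.2))

/-- The `p`-stage Runge–Kutta map `F^{a,p}_h(x,u)` for `ẋ = f(x) + g(x)u`. -/
noncomputable def rkMap {n m : ℕ} (f : EuclideanSpace ℝ (Fin n) → EuclideanSpace ℝ (Fin n))
    (g : EuclideanSpace ℝ (Fin n) → Matrix (Fin n) (Fin m) ℝ)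
    (p : ℕ) (b : ℕ → ℝ) (a : ℕ → ℕ → ℝ) (h : ℝ)
    (x : EuclideanSpace ℝ (Fin n)) (u : EuclideanSpace ℝ (Fin m)) : EuclideanSpace ℝ (Fin n) :=
  x + h • ∑ i ∈ Finset.range p,
    b i • (f (rkStages (fun _ z => f z + mulVecE (g z) u) a h x i)
      + mulVecE (g (rkStages (fun _ z => f z + mulVecE (g z) u) a h x i)) u)

lemma euclid_coord_le {m : ℕ} (u : EuclideanSpace ℝ (Fin m)) (j : Fin m) : |u j| ≤ ‖u‖ := by
  rw [EuclideanSpace.norm_eq]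
  rw [← Real.sqrt_sq_eq_abs]
  apply Real.sqrt_le_sqrt
  have := Finset.single_le_sum (f := fun i => ‖u i‖ ^ 2) (fun i _ => by positivity)
    (Finset.mem_univ j)
  simpa [Real.norm_eq_abs, sq_abs] using this

lemma mulVecE_sub {n m : ℕ} (A B : Matrix (Fin n) (Fin m) ℝ) (u : EuclideanSpace ℝ (Fin m)) :
    mulVecE (A - B) u = mulVecE A u - mulVecE B u := by
  simp [mulVecE, Matrix.sub_mulVec]

lemma norm_mulVecE_le {n m : ℕ} (A : Matrix (Fin n) (Fin m) ℝ) (u : EuclideanSpace ℝ (Fin m)) :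
    ‖mulVecE A u‖ ≤ (Real.sqrt n * m) * (‖A‖ * ‖u‖) := by
  have hAu : ∀ i, |(mulVecE A u) i| ≤ m * (‖A‖ * ‖u‖) := by
    intro i
    have : (mulVecE A u) i = ∑ j, A i j * u j := rfl
    rw [this]
    calc |∑ j, A i j * u j| ≤ ∑ j : Fin m, |A i j * u j| := Finset.abs_sum_le_sum_abs _ _
      _ ≤ ∑ _j : Fin m, ‖A‖ * ‖u‖ := by
          apply Finset.sum_le_sum
          intro j _
          rw [abs_mul]
          exact mul_le_mul (Matrix.norm_entry_le_entrywise_sup_norm A)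
            (euclid_coord_le u j) (abs_nonneg _) (norm_nonneg _)
      _ = m * (‖A‖ * ‖u‖) := by simp [Finset.sum_const, nsmul_eq_mul]
  rw [EuclideanSpace.norm_eq]
  have h1 : Real.sqrt (∑ i, ‖(mulVecE A u) i‖ ^ 2) ≤ Real.sqrt (n * (m * (‖A‖ * ‖u‖)) ^ 2) := by
    apply Real.sqrt_le_sqrt
    calc ∑ i, ‖(mulVecE A u) i‖ ^ 2 ≤ ∑ _i : Fin n, (m * (‖A‖ * ‖u‖)) ^ 2 := by
          apply Finset.sum_le_sum
          intro i _
          have : ‖(mulVecE A u) i‖ ≤ m * (‖A‖ * ‖u‖) := by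
            rw [Real.norm_eq_abs]; exact hAu i
          exact pow_le_pow_left₀ (norm_nonneg _) this 2
      _ = n * (m * (‖A‖ * ‖u‖)) ^ 2 := by simp [Finset.sum_const, nsmul_eq_mul]
  refine h1.trans ?_
  rw [Real.sqrt_mul (by positivity), Real.sqrt_sq (by positivity)]
  ring_nf
  exact le_refl _

lemma rkStages_eq {S : Type*} [AddCommGroup S] [Module ℝ S]
    (v : ℕ → S → S) (a : ℕ → ℕ → ℝ) (h : ℝ) (x : S) (i : ℕ) :
    rkStages v a h x i =
      x + h • ∑ j ∈ (Finset.range i).attach, a i j.1 • v j.1 (rkStages v a h x j.1) := by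
  simp only [rkStages]
  rw [Nat.strongRecOn_eq]

lemma lipschitzOnWith_of_locally {E F : Type*} [NormedAddCommGroup E] [NormedAddCommGroup F]
    (𝒳 : Set E) (f : E → F)
    (hf : ∀ x ∈ 𝒳, ∃ L : NNReal, ∃ t ∈ nhdsWithin x 𝒳, LipschitzOnWith L f t)
    (K : Set E) (hK : IsCompact K) (hKX : K ⊆ 𝒳) :
    ∃ L M : ℝ, 0 ≤ L ∧ 0 ≤ M ∧ (∀ y ∈ K, ∀ z ∈ K, ‖f y - f z‖ ≤ L * ‖y - z‖) ∧
      (∀ y ∈ K, ‖f y‖ ≤ M) := by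
  rcases K.eq_empty_or_nonempty with rfl | hKne
  · exact ⟨0, 0, le_refl _, le_refl _, by simp, by simp⟩
  have hcont : ContinuousOn f 𝒳 := by
    intro x hx
    obtain ⟨L, t, ht, hlip⟩ := hf x hx
    exact ((hlip.continuousOn).continuousWithinAt
      (mem_of_mem_nhdsWithin hx ht)).mono_of_mem_nhdsWithin ht
  obtain ⟨M, hM⟩ := hK.exists_bound_of_continuousOn (hcont.mono hKX)
  obtain ⟨x₀, hx₀⟩ := hKne
  have hM0 : 0 ≤ M := le_trans (norm_nonneg _) (hM x₀ hx₀)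
  have key : ∀ x ∈ K, ∃ r > 0, ∃ L : NNReal, LipschitzOnWith L f (Metric.ball x r ∩ 𝒳) := by
    intro x hx
    obtain ⟨L, t, ht, hlip⟩ := hf x (hKX hx)
    rw [nhdsWithin, Filter.mem_inf_iff] at ht
    obtain ⟨t₁, ht₁, t₂, ht₂, rfl⟩ := ht
    obtain ⟨r, hr, hball⟩ := Metric.mem_nhds_iff.mp ht₁
    exact ⟨r, hr, L, hlip.mono (fun y ⟨hy1, hy2⟩ => ⟨hball hy1, Filter.mem_principal.mp ht₂ hy2⟩)⟩
  choose! r hr L hL using key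
  obtain ⟨Fc, hFsub, hFfin, hFcov⟩ := hK.elim_finite_subcover_image
    (fun x _ => Metric.isOpen_ball (x := x) (ε := r x / 2)) (fun z hz => by
      simp only [Set.mem_iUnion]
      exact ⟨z, hz, Metric.mem_ball_self (by linarith [hr z hz])⟩)
  set Fs := hFfin.toFinset with hFs
  have hFsne : Fs.Nonempty := by
    obtain ⟨x, hx, _⟩ := Set.mem_iUnion₂.mp (hFcov hx₀)
    exact ⟨x, hFfin.mem_toFinset.mpr hx⟩
  set δ := Fs.inf' hFsne (fun x => r x / 2) with hδdef
  have hδpos : 0 < δ := by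
    rw [hδdef, Finset.lt_inf'_iff]
    intro x hx
    have := hr x (hFsub (hFfin.mem_toFinset.mp hx))
    linarith
  set C := (Fs.sup' hFsne (fun x => (L x : ℝ))) ⊔ (2 * M / δ) ⊔ 0 with hC
  refine ⟨C, M, le_max_right _ _, hM0, fun y hy z hz => ?_, hM⟩
  rcases lt_or_ge (dist y z) δ with hlt | hge
  · obtain ⟨x, hxF, hyball⟩ := Set.mem_iUnion₂.mp (hFcov hy)
    have hxFs : x ∈ Fs := hFfin.mem_toFinset.mpr hxF
    have hδle : δ ≤ r x / 2 := Finset.inf'_le _ hxFs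
    have hyb : y ∈ Metric.ball x (r x) := by
      rw [Metric.mem_ball] at hyball ⊢; linarith
    have hzb : z ∈ Metric.ball x (r x) := by
      rw [Metric.mem_ball] at hyball ⊢
      calc dist z x ≤ dist z y + dist y x := dist_triangle _ _ _
        _ < δ + r x / 2 := by rw [dist_comm z y]; linarith
        _ ≤ r x := by linarith
    have := (hL x (hFsub hxF)).dist_le_mul y ⟨hyb, hKX hy⟩ z ⟨hzb, hKX hz⟩
    rw [dist_eq_norm, dist_eq_norm] at this
    refine this.trans (mul_le_mul_of_nonneg_right ?_ (norm_nonneg _))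
    exact le_trans (Finset.le_sup' (fun x => (L x : ℝ)) hxFs)
      (le_trans (le_max_left _ _) (le_max_left _ _))
  · have h2M : ‖f y - f z‖ ≤ 2 * M := by
      calc ‖f y - f z‖ ≤ ‖f y‖ + ‖f z‖ := norm_sub_le _ _
        _ ≤ 2 * M := by linarith [hM y hy, hM z hz]
    have : 2 * M ≤ (2 * M / δ) * ‖y - z‖ := by
      rw [← dist_eq_norm]
      rw [div_mul_eq_mul_div, le_div_iff₀ hδpos]
      exact mul_le_mul_of_nonneg_left hge (by linarith)
    refine h2M.trans (this.trans ?_)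
    refine mul_le_mul_of_nonneg_right ?_ (norm_nonneg _)
    exact le_trans (le_max_right _ _) (le_max_left _ _)

set_option maxHeartbeats 2000000 in
theorem stmt1 {n m : ℕ} (𝒳 : Set (EuclideanSpace ℝ (Fin n))) (hXopen : IsOpen 𝒳)
    (f : EuclideanSpace ℝ (Fin n) → EuclideanSpace ℝ (Fin n))
    (g : EuclideanSpace ℝ (Fin n) → Matrix (Fin n) (Fin m) ℝ)
    (hf : ∀ x ∈ 𝒳, ∃ L : NNReal, ∃ t ∈ nhdsWithin x 𝒳, LipschitzOnWith L f t)
    (hg : ∀ x ∈ 𝒳, ∃ L : NNReal, ∃ t ∈ nhdsWithin x 𝒳, LipschitzOnWith L g t)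
    (K : Set (EuclideanSpace ℝ (Fin n))) (hK : IsCompact K) (hKX : K ⊆ 𝒳)
    (T : ℝ) (hT : 0 < T) (p : ℕ) (hp : 1 ≤ p)
    (b : ℕ → ℝ) (hb : ∀ i ∈ Finset.range p, 0 ≤ b i)
    (hbsum : ∑ i ∈ Finset.range p, b i = 1)
    (a : ℕ → ℕ → ℝ)
    (k : ℝ → EuclideanSpace ℝ (Fin n) → EuclideanSpace ℝ (Fin m))
    (h₁ : ℝ) (hh₁ : h₁ ∈ Set.Ioc 0 T) (MK : ℝ) (hMK : 0 ≤ MK)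
    (hkbd : ∀ h ∈ Set.Ioo (0:ℝ) h₁, ∀ x ∈ K, ‖k h x‖ ≤ MK) :
    ∃ hstar ∈ Set.Ioc (0:ℝ) h₁, ∃ ρ : ℝ → ℝ,
      Continuous ρ ∧ StrictMonoOn ρ (Set.Ici 0) ∧ ρ 0 = 0 ∧
      Filter.Tendsto ρ Filter.atTop Filter.atTop ∧
      ∀ h ∈ Set.Ioo (0:ℝ) hstar, ∀ x ∈ K, ∀ φ : ℝ → EuclideanSpace ℝ (Fin n),
        φ 0 = x →
        (∀ t ∈ Set.Icc (0:ℝ) h, φ t ∈ 𝒳) →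
        (∀ t ∈ Set.Icc (0:ℝ) h,
          HasDerivWithinAt φ (f (φ t) + mulVecE (g (φ t)) (k h x)) (Set.Icc (0:ℝ) h) t) →
        ‖φ h - rkMap f g p b a h x (k h x)‖ ≤ h * ρ h := by
  classical
  obtain ⟨r, hr, hKr⟩ := hK.exists_cthickening_subset_open hXopen hKX
  set K' := Metric.cthickening r K with hK'def
  have hK'c : IsCompact K' := hK.cthickening
  have hKK' : K ⊆ K' := Metric.self_subset_cthickening K
  obtain ⟨Lf, Mf, hLf0, hMf0, hLf, hMf⟩ := lipschitzOnWith_of_locally 𝒳 f hf K' hK'c hKr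
  obtain ⟨Lg, Mg, hLg0, hMg0, hLg, hMg⟩ := lipschitzOnWith_of_locally 𝒳 g hg K' hK'c hKr
  set Cmv : ℝ := Real.sqrt n * m with hCmvdef
  have hCmv0 : 0 ≤ Cmv := by positivity
  set M' : ℝ := Mf + Cmv * (Mg * MK) with hM'def
  set L' : ℝ := Lf + Cmv * (Lg * MK) with hL'def
  have hM'0 : 0 ≤ M' := by positivity
  have hL'0 : 0 ≤ L' := by positivity
  set A : ℝ := ∑ i ∈ Finset.range p, ∑ j ∈ Finset.range i, |a i j| with hAdef
  have hA0 : 0 ≤ A :=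
    Finset.sum_nonneg fun i _ => Finset.sum_nonneg fun j _ => abs_nonneg _
  set D : ℝ := M' * (1 + A) + 1 with hDdef
  have hD0 : 0 < D := by positivity
  set C : ℝ := L' * M' + L' * (A * M') with hCdef
  have hC0 : 0 ≤ C := by positivity
  have hC1 : 0 < C + 1 := by positivity
  refine ⟨min h₁ (r / D), ⟨lt_min hh₁.1 (by positivity), min_le_left _ _⟩,
    fun s => (C + 1) * s, (continuous_const.mul continuous_id),
    fun s _ t _ hst => by exact mul_lt_mul_of_pos_left hst hC1,
    mul_zero _, Filter.Tendsto.const_mul_atTop hC1 Filter.tendsto_id, ?_⟩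
  intro h hh x hx φ hφ0 hφX hφ'
  have hh0 : 0 < h := hh.1
  have hhh₁ : h < h₁ := lt_of_lt_of_le hh.2 (min_le_left _ _)
  have hhrD : h * D < r := by
    have := lt_of_lt_of_le hh.2 (min_le_right _ _)
    rw [lt_div_iff₀ hD0] at this
    exact this
  have hhM : h * M' < r := by nlinarith
  have hhAM : h * (A * M') ≤ r := by nlinarith
  set u := k h x with hudef
  have hu : ‖u‖ ≤ MK := hkbd h ⟨hh0, hhh₁⟩ x hx
  set v : EuclideanSpace ℝ (Fin n) → EuclideanSpace ℝ (Fin n) :=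
    fun z => f z + mulVecE (g z) u with hvdef
  have hvb : ∀ z ∈ K', ‖v z‖ ≤ M' := by
    intro z hz
    calc ‖v z‖ ≤ ‖f z‖ + ‖mulVecE (g z) u‖ := norm_add_le _ _
      _ ≤ Mf + Cmv * (‖g z‖ * ‖u‖) := add_le_add (hMf z hz) (norm_mulVecE_le _ _)
      _ ≤ M' := by
          have h1 : ‖g z‖ * ‖u‖ ≤ Mg * MK :=
            mul_le_mul (hMg z hz) hu (norm_nonneg _) hMg0
          have h2 := mul_le_mul_of_nonneg_left h1 hCmv0
          rw [hM'def]; linarith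
  have hvl : ∀ y ∈ K', ∀ z ∈ K', ‖v y - v z‖ ≤ L' * ‖y - z‖ := by
    intro y hy z hz
    have heq : v y - v z = (f y - f z) + mulVecE (g y - g z) u := by
      rw [mulVecE_sub]; simp only [hvdef]; abel
    rw [heq]
    calc ‖(f y - f z) + mulVecE (g y - g z) u‖
        ≤ ‖f y - f z‖ + ‖mulVecE (g y - g z) u‖ := norm_add_le _ _
      _ ≤ Lf * ‖y - z‖ + Cmv * (‖g y - g z‖ * ‖u‖) :=
          add_le_add (hLf y hy z hz) (norm_mulVecE_le _ _)
      _ ≤ Lf * ‖y - z‖ + Cmv * ((Lg * ‖y - z‖) * MK) := by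
          have h1 : ‖g y - g z‖ * ‖u‖ ≤ (Lg * ‖y - z‖) * MK :=
            mul_le_mul (hLg y hy z hz) hu (norm_nonneg _)
              (mul_nonneg hLg0 (norm_nonneg _))
          have h2 := mul_le_mul_of_nonneg_left h1 hCmv0
          linarith
      _ = L' * ‖y - z‖ := by rw [hL'def]; ring
  set zz : ℕ → EuclideanSpace ℝ (Fin n) :=
    rkStages (fun _ z => f z + mulVecE (g z) u) a h x with hzzdef
  have hA_i : ∀ i < p, ∑ j ∈ Finset.range i, |a i j| ≤ A := by
    intro i hi
    rw [hAdef]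
    exact Finset.single_le_sum
      (f := fun i => ∑ j ∈ Finset.range i, |a i j|)
      (fun i _ => Finset.sum_nonneg fun j _ => abs_nonneg _)
      (Finset.mem_range.mpr hi)
  have hstage : ∀ i < p, ‖zz i - x‖ ≤ h * (A * M') ∧ zz i ∈ K' := by
    intro i
    induction i using Nat.strong_induction_on with
    | _ i ih =>
      intro hip
      have hnorm : ‖zz i - x‖ ≤ h * (A * M') := by
        rw [hzzdef, rkStages_eq, add_sub_cancel_left, norm_smul,
          Real.norm_eq_abs, abs_of_pos hh0]
        have hsum : ‖∑ j ∈ (Finset.range i).attach,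
            a i j.1 • (fun (_ : ℕ) z => f z + mulVecE (g z) u) j.1
              (rkStages (fun _ z => f z + mulVecE (g z) u) a h x j.1)‖ ≤ A * M' := by
          calc ‖∑ j ∈ (Finset.range i).attach,
              a i j.1 • (fun (_ : ℕ) z => f z + mulVecE (g z) u) j.1
                (rkStages (fun _ z => f z + mulVecE (g z) u) a h x j.1)‖
              ≤ ∑ j ∈ (Finset.range i).attach, |a i j.1| * ‖v (zz j.1)‖ := by
                refine (norm_sum_le _ _).trans (le_of_eq ?_)
                refine Finset.sum_congr rfl fun j _ => ?_
                rw [norm_smul, Real.norm_eq_abs]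
            _ ≤ ∑ j ∈ (Finset.range i).attach, |a i j.1| * M' := by
                refine Finset.sum_le_sum fun j _ => ?_
                refine mul_le_mul_of_nonneg_left ?_ (abs_nonneg _)
                exact hvb _ (ih j.1 (Finset.mem_range.mp j.2)
                  (lt_trans (Finset.mem_range.mp j.2) hip)).2
            _ = ∑ j ∈ Finset.range i, |a i j| * M' :=
                Finset.sum_attach (Finset.range i) (fun j => |a i j| * M')
            _ = (∑ j ∈ Finset.range i, |a i j|) * M' := by rw [Finset.sum_mul]
            _ ≤ A * M' := mul_le_mul_of_nonneg_right (hA_i i hip) hM'0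
        exact mul_le_mul_of_nonneg_left hsum hh0.le
      refine ⟨hnorm, ?_⟩
      apply Metric.closedBall_subset_cthickening hx r
      rw [Metric.mem_closedBall, dist_eq_norm]
      exact hnorm.trans hhAM
  have hφcont : ContinuousOn φ (Set.Icc 0 h) :=
    fun t ht => (hφ' t ht).continuousWithinAt
  have hφbound : ∀ t ∈ Set.Icc (0:ℝ) h, ‖φ t - x‖ ≤ M' * t := by
    have hsub : Set.Icc (0:ℝ) h ⊆ {t | ‖φ t - x‖ ≤ M' * t} := by
      apply IsClosed.Icc_subset_of_forall_exists_gt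
      · have hG : ContinuousOn (fun t => ‖φ t - x‖ - M' * t) (Set.Icc (0:ℝ) h) :=
          ((hφcont.sub continuousOn_const).norm).sub
            (continuous_const.mul continuous_id).continuousOn
        have hEq : {t | ‖φ t - x‖ ≤ M' * t} ∩ Set.Icc (0:ℝ) h =
            Set.Icc (0:ℝ) h ∩ (fun t => ‖φ t - x‖ - M' * t) ⁻¹' (Set.Iic 0) := by
          ext t
          simp only [Set.mem_inter_iff, Set.mem_setOf_eq, Set.mem_preimage,
            Set.mem_Iic, sub_nonpos]
          tauto
        rw [hEq]
        exact hG.preimage_isClosed_of_isClosed isClosed_Icc isClosed_Iic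
      · simp [hφ0]
      · rintro t ⟨hts, ht0, hth⟩ y hy
        have hφtr : dist (φ t) x < r := by
          rw [dist_eq_norm]
          have h1 : ‖φ t - x‖ ≤ M' * t := hts
          have h2 : M' * t ≤ M' * h := mul_le_mul_of_nonneg_left hth.le hM'0
          have h3 : M' * h < r := by rw [mul_comm]; exact hhM
          linarith
        obtain ⟨δ, hδ0, hδ⟩ := Metric.continuousWithinAt_iff.mp
          (hφcont t ⟨ht0, hth.le⟩) (r - dist (φ t) x) (by linarith)
        set t' := min (t + δ/2) (min y h) with ht'def
        have htt' : t < t' := lt_min (by linarith) (lt_min hy hth)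
        have ht'h : t' ≤ h := le_trans (min_le_right _ _) (min_le_right _ _)
        have ht'y : t' ≤ y := le_trans (min_le_right _ _) (min_le_left _ _)
        have hJsub : Set.Icc t t' ⊆ Set.Icc (0:ℝ) h := Set.Icc_subset_Icc ht0 ht'h
        have hmemK' : ∀ s ∈ Set.Icc t t', φ s ∈ K' := by
          intro s hs
          have hsI : s ∈ Set.Icc (0:ℝ) h := hJsub hs
          have hst : dist s t < δ := by
            rw [Real.dist_eq, abs_of_nonneg (by linarith [hs.1])]
            have hst2 : s ≤ t + δ/2 := le_trans hs.2 (min_le_left _ _)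
            linarith
          have hd := hδ hsI hst
          have : dist (φ s) x < r :=
            lt_of_le_of_lt (dist_triangle (φ s) (φ t) x) (by linarith)
          exact Metric.closedBall_subset_cthickening hx r
            (Metric.mem_closedBall.mpr this.le)
        have hMVT : ‖φ t' - φ t‖ ≤ M' * ‖t' - t‖ := by
          refine Convex.norm_image_sub_le_of_norm_hasDerivWithin_le
            (f' := fun s => f (φ s) + mulVecE (g (φ s)) u)
            (fun s hs => (hφ' s (hJsub hs)).mono hJsub)
            (fun s hs => hvb (φ s) (hmemK' s hs)) (convex_Icc t t')
            ⟨le_refl t, htt'.le⟩ ⟨htt'.le, le_refl t'⟩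
        refine ⟨t', ?_, htt', ht'y⟩
        have htri : ‖φ t' - x‖ ≤ ‖φ t' - φ t‖ + ‖φ t - x‖ := by
          have := norm_add_le (φ t' - φ t) (φ t - x)
          rwa [sub_add_sub_cancel] at this
        have hnn : ‖t' - t‖ = t' - t := by
          rw [Real.norm_eq_abs, abs_of_nonneg (by linarith)]
        show ‖φ t' - x‖ ≤ M' * t'
        have h1 : ‖φ t - x‖ ≤ M' * t := hts
        rw [hnn] at hMVT
        have : M' * (t' - t) + M' * t = M' * t' := by ring
        linarith
    exact fun t ht => hsub ht
  have hφK' : ∀ t ∈ Set.Icc (0:ℝ) h, φ t ∈ K' := by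
    intro t ht
    apply Metric.closedBall_subset_cthickening hx r
    rw [Metric.mem_closedBall, dist_eq_norm]
    have h2 : M' * t ≤ M' * h := mul_le_mul_of_nonneg_left ht.2 hM'0
    have h3 : M' * h ≤ r := by rw [mul_comm]; exact hhM.le
    linarith [hφbound t ht]
  set w : EuclideanSpace ℝ (Fin n) := v x with hwdef
  have hψ : ‖φ h - x - h • w‖ ≤ L' * M' * h * h := by
    have hderw : ∀ t : ℝ, HasDerivAt (fun s : ℝ => s • w) w t := by
      intro t
      simpa using (hasDerivAt_id t).smul_const w
    have hder : ∀ t ∈ Set.Icc (0:ℝ) h,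
        HasDerivWithinAt (fun s => φ s - s • w) (v (φ t) - w) (Set.Icc (0:ℝ) h) t :=
      fun t ht => (hφ' t ht).sub ((hderw t).hasDerivWithinAt)
    have hbd : ∀ t ∈ Set.Icc (0:ℝ) h, ‖v (φ t) - w‖ ≤ L' * M' * h := by
      intro t ht
      have h1 : ‖v (φ t) - w‖ ≤ L' * ‖φ t - x‖ := hvl _ (hφK' t ht) _ (hKK' hx)
      have h2 : ‖φ t - x‖ ≤ M' * t := hφbound t ht
      have h3 : M' * t ≤ M' * h := mul_le_mul_of_nonneg_left ht.2 hM'0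
      calc ‖v (φ t) - w‖ ≤ L' * ‖φ t - x‖ := h1
        _ ≤ L' * (M' * h) := mul_le_mul_of_nonneg_left (h2.trans h3) hL'0
        _ = L' * M' * h := by ring
    have hmvt := Convex.norm_image_sub_le_of_norm_hasDerivWithin_le
      hder hbd (convex_Icc 0 h) ⟨le_refl (0:ℝ), hh0.le⟩ ⟨hh0.le, le_refl h⟩
    simp only [hφ0, zero_smul, sub_zero, sub_zero] at hmvt
    have hnn : ‖h‖ = h := by
      rw [Real.norm_eq_abs, abs_of_pos hh0]
    rw [hnn] at hmvt
    calc ‖φ h - x - h • w‖ = ‖φ h - h • w - x‖ := by rw [sub_right_comm]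
      _ ≤ L' * M' * h * h := hmvt
  have hrk : ‖rkMap f g p b a h x u - x - h • w‖ ≤ L' * (A * M') * h * h := by
    rw [rkMap]
    rw [add_sub_cancel_left, ← smul_sub]
    have hsplit : (∑ i ∈ Finset.range p,
        b i • (f (zz i) + mulVecE (g (zz i)) u)) - w =
        ∑ i ∈ Finset.range p, b i • (v (zz i) - w) := by
      simp only [smul_sub]
      rw [Finset.sum_sub_distrib, ← Finset.sum_smul, hbsum, one_smul]
    rw [hsplit, norm_smul, Real.norm_eq_abs, abs_of_pos hh0]
    have hsum : ‖∑ i ∈ Finset.range p, b i • (v (zz i) - w)‖ ≤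
        L' * (A * M') * h := by
      calc ‖∑ i ∈ Finset.range p, b i • (v (zz i) - w)‖
          ≤ ∑ i ∈ Finset.range p, b i * ‖v (zz i) - w‖ := by
            refine (norm_sum_le _ _).trans (le_of_eq ?_)
            refine Finset.sum_congr rfl fun i hi => ?_
            rw [norm_smul, Real.norm_eq_abs, abs_of_nonneg (hb i hi)]
        _ ≤ ∑ i ∈ Finset.range p, b i * (L' * (A * M') * h) := by
            refine Finset.sum_le_sum fun i hi => ?_
            refine mul_le_mul_of_nonneg_left ?_ (hb i hi)
            have h1 : ‖v (zz i) - w‖ ≤ L' * ‖zz i - x‖ :=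
              hvl _ (hstage i (Finset.mem_range.mp hi)).2 _ (hKK' hx)
            have h2 : ‖zz i - x‖ ≤ h * (A * M') :=
              (hstage i (Finset.mem_range.mp hi)).1
            calc ‖v (zz i) - w‖ ≤ L' * (h * (A * M')) :=
                h1.trans (mul_le_mul_of_nonneg_left h2 hL'0)
              _ = L' * (A * M') * h := by ring
        _ = L' * (A * M') * h := by
            rw [← Finset.sum_mul, hbsum, one_mul]
    calc h * ‖∑ i ∈ Finset.range p, b i • (v (zz i) - w)‖
        ≤ h * (L' * (A * M') * h) := mul_le_mul_of_nonneg_left hsum hh0.le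
      _ = L' * (A * M') * h * h := by ring
  have hdecomp : φ h - rkMap f g p b a h x u =
      (φ h - x - h • w) - (rkMap f g p b a h x u - x - h • w) := by abel
  rw [hdecomp]
  calc ‖(φ h - x - h • w) - (rkMap f g p b a h x u - x - h • w)‖
      ≤ ‖φ h - x - h • w‖ + ‖rkMap f g p b a h x u - x - h • w‖ := norm_sub_le _ _
    _ ≤ L' * M' * h * h + L' * (A * M') * h * h := add_le_add hψ hrk
    _ = C * h * h := by rw [hCdef]; ring
    _ ≤ h * ((C + 1) * h) := by nlinarith
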